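/- For every n with 1 ≤ n ≤ N_S, there exists a unitary matrix Θ ∈ ℂ^{N_S×N_S} (of the form Θ = V_B·Q·U_Fᴴ, where V_B and U_F are right and left singular-vector matrices of H_B and H_F respectively and Q is a permutation matrix) such that σ_n(H_B·Θ·H_F) = max over pairs (i,j) ∈ {1,…,N_S}² with i+j = n+N_S of σ_i(H_B)·σ_j(H_F). -/

import Mathlib

open Matrix

noncomputable def nthLargest {m : ℕ} (f : Fin m → ℝ) (n : ℕ) : ℝ :=
  if h : 1 ≤ n ∧ n ≤ m then (f ∘ Tuple.sort f) ⟨m - n, by omega⟩ else 0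

noncomputable def nthEig {m : ℕ} (Y : Matrix (Fin m) (Fin m) ℂ) (hY : Y.IsHermitian) (n : ℕ) : ℝ :=
  nthLargest hY.eigenvalues n

/-- The `n`-th largest singular value (1-based) of a complex matrix, equal to the square root
of the `n`-th largest eigenvalue of `A * Aᴴ`, with the convention that it is `0` whenever
`n` exceeds the matrix dimensions. -/
noncomputable def singVal {r c : ℕ} (A : Matrix (Fin r) (Fin c) ℂ) (n : ℕ) : ℝ :=
  Real.sqrt (nthLargest (Matrix.isHermitian_mul_conjTranspose_self A).eigenvalues n)


section Aux
open Polynomial Finset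
variable {m : ℕ}

lemma card_filter_comp_perm (σ : Equiv.Perm (Fin m)) (p : Fin m → Prop) [DecidablePred p] :
    (Finset.univ.filter fun i => p (σ i)).card = (Finset.univ.filter p).card := by
  apply Finset.card_bij' (fun i _ => σ i) (fun i _ => σ.symm i) <;> simp

lemma nthLargest_le {f : Fin m → ℝ} {a : ℝ} {n : ℕ} (hn1 : 1 ≤ n) (hn2 : n ≤ m)
    (hcard : (Finset.univ.filter fun i => a < f i).card < n) :
    nthLargest f n ≤ a := by
  rw [nthLargest, dif_pos ⟨hn1, hn2⟩]
  by_contra hlt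
  push_neg at hlt
  have hg := Tuple.monotone_sort f
  have hsub : Finset.Ici (⟨m - n, by omega⟩ : Fin m) ⊆
      Finset.univ.filter (fun i => a < f (Tuple.sort f i)) := by
    intro i hi
    simp only [Finset.mem_Ici] at hi
    simp only [Finset.mem_filter, Finset.mem_univ, true_and]
    exact lt_of_lt_of_le hlt (hg hi)
  have h1 := Finset.card_le_card hsub
  rw [Fin.card_Ici, card_filter_comp_perm (Tuple.sort f) (fun i => a < f i)] at h1
  simp only [Fin.mk_le_mk] at h1
  omega

lemma nthLargest_ge {f : Fin m → ℝ} {a : ℝ} {n : ℕ} (hn1 : 1 ≤ n) (hn2 : n ≤ m)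
    (hcard : n ≤ (Finset.univ.filter fun i => a ≤ f i).card) :
    a ≤ nthLargest f n := by
  rw [nthLargest, dif_pos ⟨hn1, hn2⟩]
  by_contra hlt
  push_neg at hlt
  have hg := Tuple.monotone_sort f
  have hsub : Finset.univ.filter (fun i => a ≤ f (Tuple.sort f i)) ⊆
      Finset.Ioi (⟨m - n, by omega⟩ : Fin m) := by
    intro i hi
    simp only [Finset.mem_filter, Finset.mem_univ, true_and] at hi
    simp only [Finset.mem_Ioi]
    by_contra hle
    push_neg at hle
    exact absurd (le_trans hi (hg hle)) (not_le.mpr hlt)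
  have h1 := Finset.card_le_card hsub
  rw [Fin.card_Ioi, card_filter_comp_perm (Tuple.sort f) (fun i => a ≤ f i)] at h1
  have hv : ((⟨m - n, by omega⟩ : Fin m) : ℕ) = m - n := rfl
  rw [hv] at h1
  omega

lemma nthLargest_eq_of_card {f : Fin m → ℝ} {a : ℝ} {n : ℕ} (hn1 : 1 ≤ n) (hn2 : n ≤ m)
    (h1 : n ≤ (Finset.univ.filter fun i => a ≤ f i).card)
    (h2 : (Finset.univ.filter fun i => a < f i).card < n) :
    nthLargest f n = a :=
  le_antisymm (nthLargest_le hn1 hn2 h2) (nthLargest_ge hn1 hn2 h1)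

lemma nthLargest_nonneg {f : Fin m → ℝ} (hf : ∀ i, 0 ≤ f i) (n : ℕ) :
    0 ≤ nthLargest f n := by
  rw [nthLargest]
  split
  · exact hf _
  · exact le_refl 0

lemma nthLargest_antitone_in_range {f : Fin m → ℝ} {a b : ℕ} (ha : 1 ≤ a) (hab : a ≤ b)
    (hb : b ≤ m) : nthLargest f b ≤ nthLargest f a := by
  rw [nthLargest, dif_pos ⟨by omega, hb⟩, nthLargest, dif_pos ⟨ha, by omega⟩]
  exact Tuple.monotone_sort f (by simp only [Fin.mk_le_mk]; omega)

lemma charpoly_unitary_conj (U B : Matrix (Fin m) (Fin m) ℂ) (hU : Uᴴ * U = 1) :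
    (U * B * Uᴴ).charpoly = B.charpoly := by
  have hU2 : U * Uᴴ = 1 := mul_eq_one_comm.mpr hU
  have hmap : (U.map (C : ℂ →+* ℂ[X])) * (Uᴴ.map (C : ℂ →+* ℂ[X])) = 1 := by
    rw [← Matrix.map_mul, hU2, Matrix.map_one _ (map_zero _) (map_one _)]
  have key : charmatrix (U * B * Uᴴ) =
      U.map (C : ℂ →+* ℂ[X]) * charmatrix B * Uᴴ.map (C : ℂ →+* ℂ[X]) := by
    have hcm : ∀ M : Matrix (Fin m) (Fin m) ℂ,
        charmatrix M = Matrix.scalar (Fin m) (X : ℂ[X]) - M.map (C : ℂ →+* ℂ[X]) := by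
      intro M; rfl
    rw [hcm, hcm, Matrix.mul_sub, Matrix.sub_mul]
    congr 1
    · symm
      rw [(Matrix.scalar_commute (X : ℂ[X]) (fun r => Commute.all _ _)
        (U.map (C : ℂ →+* ℂ[X]))).symm.eq, Matrix.mul_assoc, hmap, Matrix.mul_one]
    · rw [← Matrix.map_mul, ← Matrix.map_mul]
  rw [Matrix.charpoly, key, Matrix.det_mul, Matrix.det_mul, Matrix.charpoly]
  have : (U.map (C : ℂ →+* ℂ[X])).det * (Uᴴ.map (C : ℂ →+* ℂ[X])).det = 1 := by
    rw [← Matrix.det_mul, hmap, Matrix.det_one]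
  calc (U.map (C : ℂ →+* ℂ[X])).det * (charmatrix B).det * (Uᴴ.map (C : ℂ →+* ℂ[X])).det
      = (charmatrix B).det * ((U.map (C : ℂ →+* ℂ[X])).det * (Uᴴ.map (C : ℂ →+* ℂ[X])).det) := by
        ring
    _ = (charmatrix B).det := by rw [this, mul_one]

lemma charpoly_diagonal (v : Fin m → ℂ) :
    (Matrix.diagonal v).charpoly = ∏ i, (X - C (v i)) := by
  rw [Matrix.charpoly_of_upperTriangular _ (Matrix.blockTriangular_diagonal v)]
  simp [Matrix.diagonal_apply_eq]

lemma eig_multiset {A : Matrix (Fin m) (Fin m) ℂ} (hA : A.IsHermitian)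
    {U : Matrix (Fin m) (Fin m) ℂ} {d : Fin m → ℝ} (hU : Uᴴ * U = 1)
    (hAeq : A = U * Matrix.diagonal (fun i => (d i : ℂ)) * Uᴴ) :
    Multiset.map hA.eigenvalues Finset.univ.val = Multiset.map d Finset.univ.val := by
  have h1 : A.charpoly = ∏ i, (X - C ((d i : ℂ))) := by
    rw [hAeq, charpoly_unitary_conj _ _ hU, charpoly_diagonal]
  set W : Matrix (Fin m) (Fin m) ℂ := (hA.eigenvectorUnitary : Matrix (Fin m) (Fin m) ℂ) with hW
  have hWU : W * star W = 1 := Matrix.mem_unitaryGroup_iff.mp (hA.eigenvectorUnitary).2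
  have hWU' : Wᴴ * W = 1 := by
    rw [← Matrix.star_eq_conjTranspose]
    exact mul_eq_one_comm.mp hWU
  have h2 : A.charpoly = ∏ i, (X - C ((hA.eigenvalues i : ℂ))) := by
    conv_lhs => rw [hA.spectral_theorem]
    rw [Unitary.conjStarAlgAut_apply, Matrix.star_eq_conjTranspose, ← hW]
    have : (Matrix.diagonal (RCLike.ofReal ∘ hA.eigenvalues) : Matrix (Fin m) (Fin m) ℂ)
        = Matrix.diagonal (fun i => ((hA.eigenvalues i : ℝ) : ℂ)) := rfl
    rw [this, charpoly_unitary_conj _ _ hWU', charpoly_diagonal]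
  have e1 : ∀ (v : Fin m → ℂ), (∏ i, (X - C (v i)))
      = ((Finset.univ.val.map v).map (fun a => X - C a)).prod := by
    intro v; rw [Multiset.map_map]; rfl
  have h3 := congrArg Polynomial.roots (h2.symm.trans h1)
  rw [e1, e1, Polynomial.roots_multiset_prod_X_sub_C, Polynomial.roots_multiset_prod_X_sub_C] at h3
  have h4 : Multiset.map (Complex.ofReal) (Multiset.map hA.eigenvalues Finset.univ.val)
      = Multiset.map (Complex.ofReal) (Multiset.map d Finset.univ.val) := by
    rw [Multiset.map_map, Multiset.map_map]
    exact h3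
  exact Multiset.map_injective Complex.ofReal_injective h4

lemma card_filter_eq_of_map_eq {k : ℕ} {f : Fin m → ℝ} {g : Fin k → ℝ}
    (h : Multiset.map f Finset.univ.val = Multiset.map g Finset.univ.val)
    (p : ℝ → Prop) [DecidablePred p] :
    (Finset.univ.filter fun i => p (f i)).card = (Finset.univ.filter fun i => p (g i)).card := by
  have := congrArg (fun s => Multiset.countP p s) h
  simp only [Multiset.countP_map] at this
  simpa [Finset.filter, Finset.card] using this

lemma singVal_nonneg {r c : ℕ} (A : Matrix (Fin r) (Fin c) ℂ) (n : ℕ) : 0 ≤ singVal A n :=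
  Real.sqrt_nonneg _

lemma singVal_antitone {r c : ℕ} (A : Matrix (Fin r) (Fin c) ℂ) {a b : ℕ} (ha : 1 ≤ a)
    (hab : a ≤ b) : singVal A b ≤ singVal A a := by
  by_cases hb : b ≤ r
  · exact Real.sqrt_le_sqrt (nthLargest_antitone_in_range ha hab hb)
  · rw [singVal, nthLargest, dif_neg (by omega), Real.sqrt_zero]
    exact singVal_nonneg _ _

lemma singVal_eq_zero_of_row_lt {r c : ℕ} (A : Matrix (Fin r) (Fin c) ℂ) {j : ℕ} (hj : r < j) :
    singVal A j = 0 := by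
  rw [singVal, nthLargest, dif_neg (by omega), Real.sqrt_zero]

lemma singVal_eq_zero_of_col_lt {r c : ℕ} (A : Matrix (Fin r) (Fin c) ℂ) {j : ℕ} (hj : c < j) :
    singVal A j = 0 := by
  by_cases hjr : j ≤ r
  · rw [singVal]
    have hnn : ∀ i, 0 ≤ (Matrix.isHermitian_mul_conjTranspose_self A).eigenvalues i :=
      Matrix.eigenvalues_self_mul_conjTranspose_nonneg A
    have hrank : (A * Aᴴ).rank ≤ c := by
      open scoped ComplexOrder in
      refine le_trans (Matrix.rank_mul_le_right A Aᴴ) ?_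
      rw [Matrix.rank_conjTranspose]
      exact Matrix.rank_le_width A
    have hcard : (Finset.univ.filter fun i =>
        (0:ℝ) < (Matrix.isHermitian_mul_conjTranspose_self A).eigenvalues i).card < j := by
      have hle : (Finset.univ.filter fun i =>
          (0:ℝ) < (Matrix.isHermitian_mul_conjTranspose_self A).eigenvalues i).card ≤
          Fintype.card {i // (Matrix.isHermitian_mul_conjTranspose_self A).eigenvalues i ≠ 0} := by
        rw [Fintype.card_subtype]
        refine Finset.card_le_card (fun i hi => ?_)
        simp only [Finset.mem_filter, Finset.mem_univ, true_and] at hi ⊢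
        exact ne_of_gt hi
      calc (Finset.univ.filter fun i =>
            (0:ℝ) < (Matrix.isHermitian_mul_conjTranspose_self A).eigenvalues i).card
          ≤ Fintype.card {i // (Matrix.isHermitian_mul_conjTranspose_self A).eigenvalues i ≠ 0} :=
            hle
        _ = (A * Aᴴ).rank :=
            ((Matrix.isHermitian_mul_conjTranspose_self A).rank_eq_card_non_zero_eigs).symm
        _ ≤ c := hrank
        _ < j := hj
    have h0 : nthLargest (Matrix.isHermitian_mul_conjTranspose_self A).eigenvalues j ≤ 0 :=
      nthLargest_le (by omega) hjr hcard
    have h0' : 0 ≤ nthLargest (Matrix.isHermitian_mul_conjTranspose_self A).eigenvalues j :=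
      nthLargest_nonneg hnn j
    rw [le_antisymm h0 h0', Real.sqrt_zero]
  · exact singVal_eq_zero_of_row_lt A (by omega)

lemma permMatrix_unitary {m : ℕ} (e : Equiv.Perm (Fin m)) :
    (e.permMatrix ℂ)ᴴ * (e.permMatrix ℂ) = 1 := by
  have h1 : (e.permMatrix ℂ)ᴴ = ((e⁻¹).permMatrix ℂ) := by
    ext i j
    simp only [Matrix.conjTranspose_apply, Equiv.Perm.permMatrix, PEquiv.toMatrix_apply,
      Equiv.toPEquiv_apply, Option.mem_def, Option.some.injEq, Equiv.Perm.inv_def]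
    split_ifs with ha hb hb
    · exact star_one ℂ
    · exact absurd (by rw [← ha]; simp) hb
    · exact absurd (by rw [← hb]; simp) ha
    · exact star_zero ℂ
  rw [h1]
  show (e⁻¹).toPEquiv.toMatrix * e.toPEquiv.toMatrix = 1
  rw [PEquiv.toMatrix_toPEquiv_mul]
  ext i j
  simp only [Matrix.submatrix_apply, id_eq, PEquiv.toMatrix_apply, Equiv.toPEquiv_apply,
    Option.mem_def, Option.some.injEq, Matrix.one_apply, Equiv.Perm.inv_def,
    Equiv.apply_symm_apply, eq_comm]

end Aux

theorem stmt13 {N_R N_S N_T : ℕ}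
    (H_B : Matrix (Fin N_R) (Fin N_S) ℂ) (H_F : Matrix (Fin N_S) (Fin N_T) ℂ)
    -- singular value decompositions `H_B = U_B Σ_B V_Bᴴ` and `H_F = U_F Σ_F V_Fᴴ`,
    -- with the singular values in descending order on the diagonal:
    (U_B : Matrix (Fin N_R) (Fin N_R) ℂ) (V_B : Matrix (Fin N_S) (Fin N_S) ℂ)
    (U_F : Matrix (Fin N_S) (Fin N_S) ℂ) (V_F : Matrix (Fin N_T) (Fin N_T) ℂ)
    (hUB : U_Bᴴ * U_B = 1) (hVB : V_Bᴴ * V_B = 1)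
    (hUF : U_Fᴴ * U_F = 1) (hVF : V_Fᴴ * V_F = 1)
    (hB : H_B = U_B * (Matrix.of fun (i : Fin N_R) (j : Fin N_S) =>
      if (i : ℕ) = (j : ℕ) then ((singVal H_B ((i : ℕ) + 1) : ℝ) : ℂ) else 0) * V_Bᴴ)
    (hF : H_F = U_F * (Matrix.of fun (i : Fin N_S) (j : Fin N_T) =>
      if (i : ℕ) = (j : ℕ) then ((singVal H_F ((i : ℕ) + 1) : ℝ) : ℂ) else 0) * V_Fᴴ)
    (n : ℕ) (hn1 : 1 ≤ n) (hn2 : n ≤ N_S) :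
    ∃ (Θ : Matrix (Fin N_S) (Fin N_S) ℂ) (e : Equiv.Perm (Fin N_S)),
      Θ = V_B * e.permMatrix ℂ * U_Fᴴ ∧ Θᴴ * Θ = 1 ∧
      singVal (H_B * Θ * H_F) n =
        sSup {x : ℝ | ∃ i j : ℕ, 1 ≤ i ∧ i ≤ N_S ∧ 1 ≤ j ∧ j ≤ N_S ∧
          i + j = n + N_S ∧ x = singVal H_B i * singVal H_F j} := by
  have hNS : 0 < N_S := by omega
  -- the involutive pairing permutation
  have hg : Function.Involutive (fun k : Fin N_S =>
      if _ : n ≤ (k:ℕ)+1 then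
        (⟨n + N_S - ((k:ℕ)+2), by have := k.isLt; omega⟩ : Fin N_S) else k) := by
    intro k
    dsimp only
    by_cases h : n ≤ (k:ℕ)+1
    · rw [dif_pos h]
      have h2 : n ≤ (n + N_S - ((k:ℕ)+2)) + 1 := by have := k.isLt; omega
      rw [dif_pos h2]
      apply Fin.ext
      show n + N_S - ((n + N_S - ((k:ℕ)+2)) + 2) = (k:ℕ)
      have := k.isLt; omega
    · rw [dif_neg h, dif_neg h]
  set e : Equiv.Perm (Fin N_S) := Function.Involutive.toPerm _ hg with hedef
  have he_apply : ∀ k : Fin N_S, e k =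
      if _ : n ≤ (k:ℕ)+1 then
        (⟨n + N_S - ((k:ℕ)+2), by have := k.isLt; omega⟩ : Fin N_S) else k := fun k => rfl
  -- the maximizer
  obtain ⟨i0, hi0mem, hi0max⟩ := Finset.exists_max_image (Finset.Icc n N_S)
      (fun i => singVal H_B i * singVal H_F (n + N_S - i))
      ⟨n, Finset.mem_Icc.mpr ⟨le_refl n, hn2⟩⟩
  rw [Finset.mem_Icc] at hi0mem
  simp only [Finset.mem_Icc] at hi0max
  set a := singVal H_B i0 * singVal H_F (n + N_S - i0) with ha
  have ha_nonneg : 0 ≤ a := mul_nonneg (singVal_nonneg _ _) (singVal_nonneg _ _)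
  -- the supremum is `a`
  have hub : ∀ x ∈ {x : ℝ | ∃ i j : ℕ, 1 ≤ i ∧ i ≤ N_S ∧ 1 ≤ j ∧ j ≤ N_S ∧
      i + j = n + N_S ∧ x = singVal H_B i * singVal H_F j}, x ≤ a := by
    rintro x ⟨i, j, hi1, hi2, hj1, hj2, hij, rfl⟩
    have hin : n ≤ i := by omega
    have hj : j = n + N_S - i := by omega
    rw [hj]
    exact hi0max i ⟨hin, hi2⟩
  have hmem : a ∈ {x : ℝ | ∃ i j : ℕ, 1 ≤ i ∧ i ≤ N_S ∧ 1 ≤ j ∧ j ≤ N_S ∧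
      i + j = n + N_S ∧ x = singVal H_B i * singVal H_F j} :=
    ⟨i0, n + N_S - i0, by omega, by omega, by omega, by omega, by omega, rfl⟩
  have hSup : sSup {x : ℝ | ∃ i j : ℕ, 1 ≤ i ∧ i ≤ N_S ∧ 1 ≤ j ∧ j ≤ N_S ∧
      i + j = n + N_S ∧ x = singVal H_B i * singVal H_F j} = a :=
    le_antisymm (Real.sSup_le hub ha_nonneg) (le_csSup ⟨a, fun x hx => hub x hx⟩ hmem)
  refine ⟨V_B * e.permMatrix ℂ * U_Fᴴ, e, rfl, ?_, ?_⟩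
  · -- unitarity
    have hP := permMatrix_unitary e
    simp only [Matrix.conjTranspose_mul, Matrix.conjTranspose_conjTranspose, Matrix.mul_assoc]
    rw [← Matrix.mul_assoc V_Bᴴ V_B, hVB, Matrix.one_mul,
      ← Matrix.mul_assoc (e.permMatrix ℂ)ᴴ (e.permMatrix ℂ) U_Fᴴ, hP, Matrix.one_mul]
    exact mul_eq_one_comm.mpr hUF
  · -- the singular value computation
    set DB : Matrix (Fin N_R) (Fin N_S) ℂ := Matrix.of fun (i : Fin N_R) (j : Fin N_S) =>
      if (i : ℕ) = (j : ℕ) then ((singVal H_B ((i : ℕ) + 1) : ℝ) : ℂ) else 0 with hDB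
    set DF : Matrix (Fin N_S) (Fin N_T) ℂ := Matrix.of fun (i : Fin N_S) (j : Fin N_T) =>
      if (i : ℕ) = (j : ℕ) then ((singVal H_F ((i : ℕ) + 1) : ℝ) : ℂ) else 0 with hDF
    set M : Matrix (Fin N_R) (Fin N_T) ℂ := DB * (e.permMatrix ℂ * DF) with hM
    set dFun : Fin N_R → ℝ := fun i =>
      (if h : (i:ℕ) < N_S then
        singVal H_B ((i:ℕ)+1) * singVal H_F (((e ⟨(i:ℕ),h⟩ : Fin N_S) : ℕ)+1) else 0)^2
      with hdFun
    have hMent : ∀ (i : Fin N_R) (k : Fin N_T), M i k =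
        if h : (i:ℕ) < N_S then
          (if ((e ⟨(i:ℕ),h⟩ : Fin N_S) : ℕ) = (k:ℕ) then
            ((singVal H_B ((i:ℕ)+1) * singVal H_F (((e ⟨(i:ℕ),h⟩ : Fin N_S) : ℕ)+1) : ℝ) : ℂ)
          else 0)
        else 0 := by
      intro i k
      rw [hM, show e.permMatrix ℂ * DF = DF.submatrix e id from PEquiv.toMatrix_toPEquiv_mul e DF]
      rw [Matrix.mul_apply]
      by_cases h : (i:ℕ) < N_S
      · rw [dif_pos h, Finset.sum_eq_single (⟨(i:ℕ),h⟩ : Fin N_S)]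
        · rw [hDB]
          simp only [Matrix.submatrix_apply, id_eq, Matrix.of_apply]
          rw [if_pos trivial, hDF]
          simp only [Matrix.of_apply]
          by_cases hk : ((e ⟨(i:ℕ),h⟩ : Fin N_S) : ℕ) = (k:ℕ)
          · rw [if_pos hk, if_pos hk, ← Complex.ofReal_mul]
          · rw [if_neg hk, if_neg hk, mul_zero]
        · intro b _ hb
          rw [hDB]
          simp only [Matrix.of_apply]
          rw [if_neg, zero_mul]
          intro hc
          exact hb (Fin.ext hc.symm)
        · intro habs; exact absurd (Finset.mem_univ _) habs
      · rw [dif_neg h]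
        apply Finset.sum_eq_zero
        intro b _
        rw [hDB]
        simp only [Matrix.of_apply]
        rw [if_neg, zero_mul]
        intro hc
        exact h (hc ▸ b.isLt)
    have hMM : M * Mᴴ = Matrix.diagonal (fun i => ((dFun i : ℝ) : ℂ)) := by
      ext i i'
      rw [Matrix.mul_apply, Matrix.diagonal_apply]
      simp only [Matrix.conjTranspose_apply, hMent]
      by_cases hii : i = i'
      · subst hii
        rw [if_pos rfl, hdFun]
        dsimp only
        by_cases h : (i:ℕ) < N_S
        · by_cases hk : ((e ⟨(i:ℕ),h⟩ : Fin N_S) : ℕ) < N_T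
          · rw [Finset.sum_eq_single (⟨((e ⟨(i:ℕ),h⟩ : Fin N_S) : ℕ), hk⟩ : Fin N_T)]
            · rw [dif_pos h, if_pos rfl, dif_pos h, Complex.star_def, Complex.conj_ofReal,
                ← Complex.ofReal_mul, pow_two]
            · intro b _ hb
              rw [dif_pos h, if_neg, zero_mul]
              intro hc
              exact hb (Fin.ext hc.symm)
            · intro habs; exact absurd (Finset.mem_univ _) habs
          · rw [Finset.sum_eq_zero, dif_pos h,
              singVal_eq_zero_of_col_lt H_F (by omega), mul_zero]
            · norm_num
            · intro b _
              rw [dif_pos h, if_neg (by intro hc; exact hk (by rw [hc]; exact b.isLt)), zero_mul]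
        · rw [Finset.sum_eq_zero, dif_neg h]
          · norm_num
          · intro b _
            rw [dif_neg h, zero_mul]
      · rw [if_neg hii]
        apply Finset.sum_eq_zero
        intro k _
        by_cases h : (i:ℕ) < N_S
        · by_cases h' : (i':ℕ) < N_S
          · rw [dif_pos h, dif_pos h']
            by_cases hk : ((e ⟨(i:ℕ),h⟩ : Fin N_S) : ℕ) = (k:ℕ)
            · rw [if_pos hk, if_neg, star_zero, mul_zero]
              intro hc
              apply hii
              have h3 : (⟨(i:ℕ),h⟩ : Fin N_S) = ⟨(i':ℕ),h'⟩ :=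
                e.injective (Fin.ext (hk.trans hc.symm))
              have h4 : ((⟨(i:ℕ),h⟩ : Fin N_S) : ℕ) = ((⟨(i':ℕ),h'⟩ : Fin N_S) : ℕ) :=
                congrArg Fin.val h3
              exact Fin.ext h4
            · rw [if_neg hk, zero_mul]
          · rw [dif_neg h', star_zero, mul_zero]
        · rw [dif_neg h, zero_mul]
    have hX1 : H_B * (V_B * e.permMatrix ℂ * U_Fᴴ) * H_F = U_B * M * V_Fᴴ := by
      conv_lhs => rw [hB, hF]
      rw [hM]
      simp only [← Matrix.mul_assoc]
      rw [Matrix.mul_assoc (U_B * DB) V_Bᴴ V_B, hVB, Matrix.mul_one,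
        Matrix.mul_assoc (U_B * DB * e.permMatrix ℂ) U_Fᴴ U_F, hUF, Matrix.mul_one]
    have hXX : (H_B * (V_B * e.permMatrix ℂ * U_Fᴴ) * H_F) *
        (H_B * (V_B * e.permMatrix ℂ * U_Fᴴ) * H_F)ᴴ =
        U_B * Matrix.diagonal (fun i => ((dFun i : ℝ) : ℂ)) * U_Bᴴ := by
      rw [hX1]
      rw [show (U_B * M * V_Fᴴ)ᴴ = V_F * (Mᴴ * U_Bᴴ) by
        simp only [Matrix.conjTranspose_mul, Matrix.conjTranspose_conjTranspose,
          Matrix.mul_assoc]]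
      calc U_B * M * V_Fᴴ * (V_F * (Mᴴ * U_Bᴴ))
          = U_B * (M * Mᴴ) * U_Bᴴ := by
            simp only [Matrix.mul_assoc]
            rw [← Matrix.mul_assoc V_Fᴴ V_F, hVF, Matrix.one_mul]
        _ = U_B * Matrix.diagonal (fun i => ((dFun i : ℝ) : ℂ)) * U_Bᴴ := by rw [hMM]
    have hms := eig_multiset (Matrix.isHermitian_mul_conjTranspose_self
      (H_B * (V_B * e.permMatrix ℂ * U_Fᴴ) * H_F)) hUB hXX
    rw [hSup]
    by_cases hnR : n ≤ N_R
    · -- in-range case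
      have hF2 : ∀ i : Fin N_R, n - 1 ≤ (i:ℕ) → dFun i ≤ a^2 := by
        intro i hi
        rw [hdFun]
        dsimp only
        by_cases h : (i:ℕ) < N_S
        · rw [dif_pos h]
          have hval : ((e ⟨(i:ℕ),h⟩ : Fin N_S) : ℕ) = n + N_S - ((i:ℕ)+2) := by
            rw [he_apply, dif_pos (by simp only [Fin.val_mk]; omega)]
          rw [hval, show n + N_S - ((i:ℕ)+2) + 1 = n + N_S - ((i:ℕ)+1) by omega]
          have hle : singVal H_B ((i:ℕ)+1) * singVal H_F (n + N_S - ((i:ℕ)+1)) ≤ a :=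
            hi0max ((i:ℕ)+1) ⟨by omega, by omega⟩
          exact pow_le_pow_left₀ (mul_nonneg (singVal_nonneg _ _) (singVal_nonneg _ _)) hle 2
        · rw [dif_neg h, show ((0:ℝ))^2 = 0 by norm_num]
          exact sq_nonneg a
      have hF1 : ∀ i : Fin N_R, (i:ℕ) < n - 1 → a^2 ≤ dFun i := by
        intro i hi
        rw [hdFun]
        dsimp only
        have h : (i:ℕ) < N_S := by omega
        rw [dif_pos h]
        have hval : ((e ⟨(i:ℕ),h⟩ : Fin N_S) : ℕ) = (i:ℕ) := by
          rw [he_apply, dif_neg (by simp only [Fin.val_mk]; omega)]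
        rw [hval]
        refine pow_le_pow_left₀ ha_nonneg ?_ 2
        rw [ha]
        exact mul_le_mul (singVal_antitone H_B (by omega) (by omega))
          (singVal_antitone H_F (by omega) (by omega)) (singVal_nonneg _ _) (singVal_nonneg _ _)
      have hcount2 : (Finset.univ.filter fun i : Fin N_R => a^2 < dFun i).card < n := by
        have hsub : (Finset.univ.filter fun i : Fin N_R => a^2 < dFun i) ⊆
            Finset.Iio (⟨n-1, by omega⟩ : Fin N_R) := by
          intro i hi
          rw [Finset.mem_filter] at hi
          rw [Finset.mem_Iio, Fin.lt_def, Fin.val_mk]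
          by_contra hc
          push_neg at hc
          exact absurd hi.2 (not_lt.mpr (hF2 i hc))
        have hcc := Finset.card_le_card hsub
        rw [Fin.card_Iio, Fin.val_mk] at hcc
        omega
      have hcount1 : n ≤ (Finset.univ.filter fun i : Fin N_R => a^2 ≤ dFun i).card := by
        by_cases haz : a = 0
        · have hall : (Finset.univ.filter fun i : Fin N_R => a^2 ≤ dFun i) = Finset.univ := by
            apply Finset.filter_true_of_mem
            intro i _
            rw [haz, show ((0:ℝ))^2 = 0 by norm_num, hdFun]
            exact sq_nonneg _
          rw [hall, Finset.card_univ, Fintype.card_fin]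
          omega
        · have hi0R : i0 ≤ N_R := by
            by_contra hc
            push_neg at hc
            exact haz (by rw [ha, singVal_eq_zero_of_row_lt H_B hc, zero_mul])
          have hdmax : ∀ i : Fin N_R, (i:ℕ) = i0 - 1 → dFun i = a^2 := by
            intro i hi
            rw [hdFun]
            dsimp only
            have h : (i:ℕ) < N_S := by omega
            rw [dif_pos h]
            have hval : ((e ⟨(i:ℕ),h⟩ : Fin N_S) : ℕ) = n + N_S - (i0+1) := by
              rw [he_apply, dif_pos (by simp only [Fin.val_mk]; omega)]
              simp only [Fin.val_mk]
              omega
            rw [hval, show (i:ℕ) + 1 = i0 by omega,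
              show n + N_S - (i0+1) + 1 = n + N_S - i0 by omega, ha]
          have hsub : insert (⟨i0-1, by omega⟩ : Fin N_R)
              (Finset.Iio (⟨n-1, by omega⟩ : Fin N_R)) ⊆
              (Finset.univ.filter fun i : Fin N_R => a^2 ≤ dFun i) := by
            intro i hi
            rw [Finset.mem_insert] at hi
            rw [Finset.mem_filter]
            refine ⟨Finset.mem_univ _, ?_⟩
            rcases hi with hi | hi
            · rw [hi]
              rw [hdmax ⟨i0-1, by omega⟩ (by simp only [Fin.val_mk])]
            · rw [Finset.mem_Iio, Fin.lt_def, Fin.val_mk] at hi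
              exact hF1 i hi
          have hcc := Finset.card_le_card hsub
          rw [Finset.card_insert_of_notMem (by
            rw [Finset.mem_Iio, Fin.lt_def, Fin.val_mk, Fin.val_mk]
            omega), Fin.card_Iio, Fin.val_mk] at hcc
          omega
      have heig : nthLargest (Matrix.isHermitian_mul_conjTranspose_self
          (H_B * (V_B * e.permMatrix ℂ * U_Fᴴ) * H_F)).eigenvalues n = a^2 := by
        refine nthLargest_eq_of_card hn1 hnR ?_ ?_
        · rw [card_filter_eq_of_map_eq hms (fun x => a^2 ≤ x)]
          exact hcount1
        · rw [card_filter_eq_of_map_eq hms (fun x => a^2 < x)]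
          exact hcount2
      rw [singVal, heig, Real.sqrt_sq ha_nonneg]
    · -- out-of-range case : both sides are zero
      push_neg at hnR
      have ha0 : a = 0 := by
        rw [ha, singVal_eq_zero_of_row_lt H_B (by omega), zero_mul]
      rw [ha0, singVal, nthLargest, dif_neg (by omega), Real.sqrt_zero]
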